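/- If γ: ℝ → M is continuous and Ω_f(γ) is nonempty and compact, where M carries a complete metric (proper metric space), then γ is totally future imprisoned in the closed ε-neighborhood of Ω_f(γ) for every ε > 0. -/
import Mathlib


open Set Metric

theorem totally_imprisoned_in_eps_nbhd {M : Type*} [MetricSpace M] [ProperSpace M]
    (γ : ℝ → M) (hγ : Continuous γ)
    (hne : (⋂ t : ℝ, closure (γ '' Ici t)).Nonempty)
    (hcpt : IsCompact (⋂ t : ℝ, closure (γ '' Ici t))) :
    ∀ ε > (0 : ℝ), ∃ T : ℝ, ∀ t ≥ T,
      γ t ∈ {y : M | infDist y (⋂ t : ℝ, closure (γ '' Ici t)) ≤ ε} := by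
  intro ε hε
  set Ω : Set M := ⋂ t : ℝ, closure (γ '' Ici t) with hΩ
  by_contra h
  push_neg at h
  simp only [mem_setOf_eq, not_le] at h
  have f_cont : Continuous fun t : ℝ => infDist (γ t) Ω :=
    (continuous_infDist_pt Ω).comp hγ
  -- For each n, find a time u ≥ n where the infDist is exactly ε.
  have key : ∀ n : ℕ, ∃ u : ℝ, (n : ℝ) ≤ u ∧ infDist (γ u) Ω = ε := by
    intro n
    obtain ⟨ω, hω⟩ := hne
    have hω' : ω ∈ closure (γ '' Ici (n : ℝ)) := mem_iInter.mp hω n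
    obtain ⟨x, hx, hxd⟩ := Metric.mem_closure_iff.mp hω' ε hε
    obtain ⟨s, hs, rfl⟩ := hx
    have hfs : infDist (γ s) Ω < ε :=
      lt_of_le_of_lt (infDist_le_dist_of_mem hω) (by rwa [dist_comm])
    obtain ⟨t, hts, hft⟩ := h s
    have hst : s ≤ t := hts
    have : ε ∈ (fun r : ℝ => infDist (γ r) Ω) '' Icc s t :=
      intermediate_value_Icc hst f_cont.continuousOn ⟨hfs.le, hft.le⟩
    obtain ⟨u, hu, hfu⟩ := this
    exact ⟨u, le_trans hs hu.1, hfu⟩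
  choose u hu hfu using key
  -- the points γ (u n) lie in the compact set cthickening ε Ω
  have hK : IsCompact (cthickening ε Ω) := hcpt.cthickening
  have hmem : ∀ n : ℕ, γ (u n) ∈ cthickening ε Ω := by
    intro n
    rw [mem_cthickening_iff]
    refine (ENNReal.le_ofReal_iff_toReal_le (infEdist_ne_top hne) hε.le).mpr ?_
    exact le_of_eq (hfu n)
  obtain ⟨p, hpK, φ, hφ, hlim⟩ := hK.tendsto_subseq hmem
  -- p is in Ω
  have hpΩ : p ∈ Ω := by
    rw [hΩ, mem_iInter]
    intro t
    refine mem_closure_of_tendsto hlim ?_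
    filter_upwards [Filter.eventually_ge_atTop ⌈t⌉₊] with k hk
    refine ⟨u (φ k), ?_, rfl⟩
    have h1 : (t : ℝ) ≤ (⌈t⌉₊ : ℝ) := Nat.le_ceil t
    have h2 : ((⌈t⌉₊ : ℕ) : ℝ) ≤ (φ k : ℝ) := by
      exact_mod_cast le_trans hk (hφ.le_apply)
    exact mem_Ici.mpr (h1.trans (h2.trans (hu (φ k))))
  -- but infDist p Ω = ε
  have h1 : Filter.Tendsto (fun k : ℕ => infDist (γ (u (φ k))) Ω) Filter.atTop
      (nhds (infDist p Ω)) :=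
    ((continuous_infDist_pt Ω).continuousAt.tendsto).comp hlim
  have h2 : Filter.Tendsto (fun k : ℕ => infDist (γ (u (φ k))) Ω) Filter.atTop
      (nhds ε) := by
    simp only [hfu]
    exact tendsto_const_nhds
  have : infDist p Ω = ε := tendsto_nhds_unique h1 h2
  rw [infDist_zero_of_mem hpΩ] at this
  exact hε.ne this
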